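/- Let λ be a measure on X such that R 1 is λ-integrable and λ is forward quasi-invariant under σ, meaning that for every measurable set A with λ(A) = 0 the image σ(A) is a λ-null set (i.e. contained in a measurable set of λ-measure zero). Then the set function A ↦ ∫ R(1_A) dλ (defined on measurable sets, where 1_A is the indicator function of A) is absolutely continuous with respect to λ: for every measurable set A, λ(A) = 0 implies ∫ R(1_A) dλ = 0. -/
import Mathlib


open MeasureTheory

/-- If `R 1` is `λ`-integrable and `σ` is forward quasi-invariant for `λ`
(null sets have null images), then `A ↦ ∫ R(1_A) dλ` is absolutely continuous
with respect to `λ`. -/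
theorem stmt_0 {X : Type*} [MeasurableSpace X] (σ : X → X)
    (hσ : Measurable σ) (hσsurj : Function.Surjective σ)
    (R : (X → ℝ) → (X → ℝ))
    (hadd : ∀ f g : X → ℝ, R (f + g) = R f + R g)
    (hsmul : ∀ (c : ℝ) (f : X → ℝ), R (c • f) = c • R f)
    (hmeas : ∀ f : X → ℝ, Measurable f → Measurable (R f))
    (hpos : ∀ f : X → ℝ, 0 ≤ f → 0 ≤ R f)
    (hpull : ∀ f g : X → ℝ, Measurable f → Measurable g →
      R ((f ∘ σ) * g) = f * R g)
    (lam : Measure X)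
    (hint : Integrable (R 1) lam)
    (hfwd : ∀ A : Set X, MeasurableSet A → lam A = 0 → lam (σ '' A) = 0) :
    ∀ A : Set X, MeasurableSet A → lam A = 0 →
      ∫ x, R (A.indicator fun _ => (1 : ℝ)) x ∂lam = 0 := by
  intro A hA hA0
  -- monotonicity of R
  have hmono : ∀ f g : X → ℝ, f ≤ g → R f ≤ R g := by
    intro f g hfg
    have h1 : R (g - f) = R g - R f := by
      have : g = (g - f) + f := by ring
      nth_rewrite 2 [this]
      rw [hadd]; abel
    have h2 : 0 ≤ R (g - f) := hpos _ (fun x => by simpa using hfg x)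
    intro x
    have := h2 x
    rw [h1] at this
    simpa using sub_nonneg.mp this
  set B := toMeasurable lam (σ '' A) with hBdef
  have hBm : MeasurableSet B := measurableSet_toMeasurable _ _
  have hB0 : lam B = 0 := by
    rw [measure_toMeasurable]; exact hfwd A hA hA0
  -- pointwise bound
  have hle : (A.indicator fun _ => (1 : ℝ)) ≤
      ((B.indicator fun _ => (1 : ℝ)) ∘ σ) * 1 := by
    intro x
    simp only [Function.comp_apply, Pi.mul_apply, Pi.one_apply, mul_one]
    by_cases hx : x ∈ A
    · have hσx : σ x ∈ B := subset_toMeasurable _ _ ⟨x, hx, rfl⟩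
      classical
      simp [Set.indicator_apply, hx, hσx]
    · classical
      rw [Set.indicator_apply, if_neg hx]
      exact Set.indicator_nonneg (fun _ _ => zero_le_one) _
  have hRle : R (A.indicator fun _ => (1 : ℝ)) ≤
      (B.indicator fun _ => (1 : ℝ)) * R 1 := by
    have := hmono _ _ hle
    rwa [hpull _ _ (measurable_const.indicator hBm) measurable_one] at this
  have hR0 : 0 ≤ R (A.indicator fun _ => (1 : ℝ)) :=
    hpos _ (Set.indicator_nonneg (fun _ _ => zero_le_one))
  -- a.e. zero
  have hae : R (A.indicator fun _ => (1 : ℝ)) =ᵐ[lam] 0 := by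
    have hBnull : ∀ᵐ x ∂lam, x ∉ B := by
      rw [ae_iff]; simpa using hB0
    filter_upwards [hBnull] with x hx
    have h1 := hRle x
    have h2 := hR0 x
    rw [Pi.mul_apply, Set.indicator_of_notMem hx, zero_mul] at h1
    have h2' : (0:ℝ) ≤ R (A.indicator fun _ => (1:ℝ)) x := by simpa using h2
    simp only [Pi.zero_apply]
    linarith
  rw [integral_congr_ae hae]
  simp
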